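/- Let A be a positively graded commutative ring and let a be a nonzero homogeneous element of A of positive degree (i.e. a ∈ A_+). Then the basic open subset D(a) = {P ∈ Proj A | a ∉ P} of Proj A is quasi-compact. -/
import Mathlib

/-- Let `A` be a positively graded commutative ring and `a` a nonzero homogeneous element of
positive degree. Then the basic open subset `D(a) = {P ∈ Proj A | a ∉ P}` of `Proj A` is
quasi-compact. -/
theorem projectiveSpectrum_basicOpen_isCompact {R A : Type*} [CommSemiring R] [CommRing A]
    [Algebra R A] (𝒜 : ℕ → Submodule R A) [GradedAlgebra 𝒜]
    (a : A) {i : ℕ} (hi : 0 < i) (ha : a ∈ 𝒜 i) (ha0 : a ≠ 0) :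
    IsCompact (ProjectiveSpectrum.basicOpen 𝒜 a : Set (ProjectiveSpectrum 𝒜)) := by
  classical
  apply isCompact_of_finite_subfamily_closed
  intro ι Z hZc hZ
  -- the vanishing ideals of the closed sets
  set I : ι → HomogeneousIdeal 𝒜 := fun j => ProjectiveSpectrum.vanishingIdeal (Z j) with hI
  have hZeq : ∀ j, Z j = ProjectiveSpectrum.zeroLocus 𝒜 (I j) := fun j => by
    rw [hI]
    rw [ProjectiveSpectrum.zeroLocus_vanishingIdeal_eq_closure, (hZc j).closure_eq]
  set J : Ideal A := ⨆ j, (I j).toIdeal with hJ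
  have hJhom : J.IsHomogeneous 𝒜 := by
    rw [hJ, ← HomogeneousIdeal.toIdeal_iSup]
    exact HomogeneousIdeal.isHomogeneous _
  -- a is in the radical of J
  have haJ : a ∈ J.radical := by
    rw [hJhom.radical_eq, Submodule.mem_sInf]
    rintro P ⟨hPhom, hJP, hPprime⟩
    by_cases hirr : HomogeneousIdeal.irrelevant 𝒜 ≤ ⟨P, hPhom⟩
    · exact hirr <| by
        rw [HomogeneousIdeal.mem_irrelevant_iff, GradedRing.proj_apply,
          DirectSum.decompose_of_mem_ne 𝒜 ha hi.ne']
    · set x : ProjectiveSpectrum 𝒜 := ⟨⟨P, hPhom⟩, hPprime, hirr⟩ with hx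
      have hxZ : x ∈ ⋂ j, Z j := by
        rw [Set.mem_iInter]
        intro j
        rw [hZeq j, ProjectiveSpectrum.mem_zeroLocus]
        intro y hy
        exact hJP (le_iSup (fun j => (I j).toIdeal) j hy)
      by_contra hnot
      have : x ∈ (ProjectiveSpectrum.basicOpen 𝒜 a : Set (ProjectiveSpectrum 𝒜)) ∩ ⋂ j, Z j :=
        ⟨by rwa [SetLike.mem_coe, ProjectiveSpectrum.mem_basicOpen], hxZ⟩
      rw [hZ] at this
      exact this
  obtain ⟨n, hn⟩ := haJ
  obtain ⟨u, hu⟩ := Submodule.exists_finset_of_mem_iSup (fun j => (I j).toIdeal) hn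
  refine ⟨u, Set.eq_empty_iff_forall_notMem.mpr fun x ⟨hxs, hxZ⟩ => ?_⟩
  have hle : (⨆ j ∈ u, (I j).toIdeal) ≤ x.asHomogeneousIdeal.toIdeal := by
    refine iSup₂_le fun j hj => ?_
    have := Set.mem_iInter₂.mp hxZ j hj
    rw [hZeq j, ProjectiveSpectrum.mem_zeroLocus] at this
    exact this
  have : a ∈ x.asHomogeneousIdeal :=
    x.isPrime.mem_of_pow_mem n (hle hu)
  rw [SetLike.mem_coe, ProjectiveSpectrum.mem_basicOpen] at hxs
  exact hxs this
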